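/- For 0 < σ ≤ β, the function h(γ) = 1 − 4γσ/(1 + 2γσ + (γβ)²) on (0,∞) is minimized at γ = 1/β, and the minimum value is (β/σ − 1)/(β/σ + 1); equivalently the optimal contraction factor √h(γ) equals √((β−σ)/(β+σ)). -/
import Mathlib


theorem optimal_gamma_sm_lipschitz (σ β : ℝ) (hσ : 0 < σ) (hσβ : σ ≤ β) :
    (∀ γ : ℝ, 0 < γ →
      1 - 4 * (1 / β) * σ / (1 + 2 * (1 / β) * σ + ((1 / β) * β) ^ 2) ≤
        1 - 4 * γ * σ / (1 + 2 * γ * σ + (γ * β) ^ 2)) ∧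
    (1 - 4 * (1 / β) * σ / (1 + 2 * (1 / β) * σ + ((1 / β) * β) ^ 2) =
      (β / σ - 1) / (β / σ + 1)) ∧
    (Real.sqrt (1 - 4 * (1 / β) * σ / (1 + 2 * (1 / β) * σ + ((1 / β) * β) ^ 2)) =
      Real.sqrt ((β - σ) / (β + σ))) := by
  have hβ : 0 < β := lt_of_lt_of_le hσ hσβ
  have hβσ : 0 < β + σ := by linarith
  have key : 1 - 4 * (1 / β) * σ / (1 + 2 * (1 / β) * σ + ((1 / β) * β) ^ 2)
      = (β - σ) / (β + σ) := by
    field_simp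
    ring
  refine ⟨?_, ?_, by rw [key]⟩
  · intro γ hγ
    have hD : 0 < 1 + 2 * γ * σ + (γ * β) ^ 2 := by positivity
    have h2 : 1 - 4 * γ * σ / (1 + 2 * γ * σ + (γ * β) ^ 2)
        = (1 + 2 * γ * σ + (γ * β) ^ 2 - 4 * γ * σ) / (1 + 2 * γ * σ + (γ * β) ^ 2) := by
      field_simp
    rw [key, h2, div_le_div_iff₀ hβσ hD]
    nlinarith [sq_nonneg (γ * β - 1), sq_nonneg (γ * β + 1), mul_pos hγ hσ,
      mul_nonneg (mul_nonneg hγ.le hγ.le) (mul_nonneg hσ.le (sub_nonneg.2 hσβ))]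
  · rw [key]
    rw [div_eq_div_iff hβσ.ne' (by positivity : (β / σ + 1 : ℝ) ≠ 0)]
    field_simp
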